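/- Let T ∈ B(H) be a contraction with unitary dilation U ∈ B(K), K ⊇ H, so that Tⁿ = P_H Uⁿ|_H for all n ≥ 0. Then for any polynomial p (in one complex variable) ‖p(T)‖ ≤ ‖p(U)‖ ≤ sup_{|ξ|=1} |p(ξ)| (von Neumann's inequality via dilation), and more generally for any n×n matrix (p_{ij}) of polynomials, ‖(p_{ij}(T))‖_{Mₙ(B(H))} ≤ sup_{|ξ|=1} ‖(p_{ij}(ξ))‖_{Mₙ(ℂ)}. -/

import Mathlib

open scoped Matrix.Norms.L2Operator
set_option maxHeartbeats 1000000
set_option synthInstance.maxHeartbeats 400000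

/-- A matrix of operators, viewed as one operator on the Hilbert-space direct sum
`ℓ²`-sum of `n` copies of `H`; this realizes the C*-norm on `Mₙ(B(H))`. -/
noncomputable def blockOp {n : ℕ} {H : Type*} [NormedAddCommGroup H]
    [InnerProductSpace ℂ H] (M : Matrix (Fin n) (Fin n) (H →L[ℂ] H)) :
    PiLp 2 (fun _ : Fin n => H) →L[ℂ] PiLp 2 (fun _ : Fin n => H) :=
  (PiLp.continuousLinearEquiv 2 ℂ (fun _ : Fin n => H)).symm.toContinuousLinearMap
    ∘L (ContinuousLinearMap.pi fun i =>
          ∑ j : Fin n, (M i j).comp (ContinuousLinearMap.proj j))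
    ∘L (PiLp.continuousLinearEquiv 2 ℂ (fun _ : Fin n => H)).toContinuousLinearMap


instance piLp2CompleteSpace {n : ℕ} {H : Type*} [NormedAddCommGroup H] [CompleteSpace H] :
    CompleteSpace (PiLp 2 fun _ : Fin n => H) := inferInstance

section blockOpLemmas

variable {n : ℕ} {H : Type*} [NormedAddCommGroup H] [InnerProductSpace ℂ H]

lemma blockOp_apply (M : Matrix (Fin n) (Fin n) (H →L[ℂ] H))
    (x : PiLp 2 (fun _ : Fin n => H)) (i : Fin n) :
    blockOp M x i = ∑ j, M i j (x j) := by
  simp [blockOp, ContinuousLinearMap.sum_apply]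

lemma blockOp_add (A B : Matrix (Fin n) (Fin n) (H →L[ℂ] H)) :
    blockOp (A + B) = blockOp A + blockOp B := by
  ext x i
  simp [blockOp_apply, Finset.sum_add_distrib]

lemma blockOp_smul (c : ℂ) (A : Matrix (Fin n) (Fin n) (H →L[ℂ] H)) :
    blockOp (c • A) = c • blockOp A := by
  ext x i
  simp [blockOp_apply, Finset.smul_sum]

lemma blockOp_zero : blockOp (0 : Matrix (Fin n) (Fin n) (H →L[ℂ] H)) = 0 := by
  ext x i
  simp [blockOp_apply]

lemma blockOp_mul (A B : Matrix (Fin n) (Fin n) (H →L[ℂ] H)) :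
    blockOp (A * B) = blockOp A * blockOp B := by
  ext x i
  rw [ContinuousLinearMap.mul_apply]
  simp only [blockOp_apply, Matrix.mul_apply, ContinuousLinearMap.sum_apply,
    ContinuousLinearMap.mul_apply, map_sum]
  exact Finset.sum_comm

lemma blockOp_star [CompleteSpace H] (A : Matrix (Fin n) (Fin n) (H →L[ℂ] H)) :
    blockOp (Matrix.of fun i j => ContinuousLinearMap.adjoint (A j i))
      = ContinuousLinearMap.adjoint (blockOp A) := by
  rw [ContinuousLinearMap.eq_adjoint_iff]
  intro x y
  simp only [PiLp.inner_apply, blockOp_apply, Matrix.of_apply, sum_inner, inner_sum,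
    ContinuousLinearMap.adjoint_inner_left]
  exact Finset.sum_comm

end blockOpLemmas

section compress

variable {n : ℕ} {H K : Type*}
    [NormedAddCommGroup H] [InnerProductSpace ℂ H] [CompleteSpace H]
    [NormedAddCommGroup K] [InnerProductSpace ℂ K] [CompleteSpace K]

lemma blockOp_compress (V : H →L[ℂ] K) (hV : ∀ x : H, ‖V x‖ = ‖x‖)
    (N : Matrix (Fin n) (Fin n) (K →L[ℂ] K)) :
    ‖blockOp (Matrix.of fun i j =>
        ContinuousLinearMap.adjoint V ∘L N i j ∘L V)‖ ≤ ‖blockOp N‖ := by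
  have hVa : ∀ z : K, ‖ContinuousLinearMap.adjoint V z‖ ≤ ‖z‖ := by
    intro z
    calc ‖ContinuousLinearMap.adjoint V z‖ ≤ ‖ContinuousLinearMap.adjoint V‖ * ‖z‖ :=
          (ContinuousLinearMap.adjoint V).le_opNorm z
    _ ≤ 1 * ‖z‖ := by
        gcongr
        rw [LinearIsometryEquiv.norm_map]
        exact ContinuousLinearMap.opNorm_le_bound V zero_le_one fun x => by rw [hV x, one_mul]
    _ = ‖z‖ := one_mul _
  refine ContinuousLinearMap.opNorm_le_bound _ (norm_nonneg _) fun x => ?_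
  set w : PiLp 2 (fun _ : Fin n => K) := WithLp.toLp 2 (fun j => V (x j)) with hw
  have hwn : ‖w‖ = ‖x‖ := by
    rw [PiLp.norm_eq_sum (by norm_num), PiLp.norm_eq_sum (by norm_num)]
    congr 1
    exact Finset.sum_congr rfl fun j _ => by rw [hw]; simp [hV (x j)]
  have happ : ∀ i, blockOp (Matrix.of fun i j =>
        ContinuousLinearMap.adjoint V ∘L N i j ∘L V) x i
      = ContinuousLinearMap.adjoint V (blockOp N w i) := by
    intro i
    rw [blockOp_apply, blockOp_apply, map_sum]
    exact Finset.sum_congr rfl fun j _ => by simp [hw]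
  have h2 : ‖blockOp (Matrix.of fun i j =>
        ContinuousLinearMap.adjoint V ∘L N i j ∘L V) x‖ ^ 2
      ≤ (‖blockOp N‖ * ‖x‖) ^ 2 := by
    rw [PiLp.norm_sq_eq_of_L2]
    calc ∑ i, ‖blockOp (Matrix.of fun i j =>
            ContinuousLinearMap.adjoint V ∘L N i j ∘L V) x i‖ ^ 2
        ≤ ∑ i, ‖blockOp N w i‖ ^ 2 := by
          refine Finset.sum_le_sum fun i _ => ?_
          rw [happ i]
          exact pow_le_pow_left₀ (norm_nonneg _) (hVa _) 2
      _ = ‖blockOp N w‖ ^ 2 := (PiLp.norm_sq_eq_of_L2 _ _).symm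
      _ ≤ (‖blockOp N‖ * ‖w‖) ^ 2 := by
          exact pow_le_pow_left₀ (norm_nonneg _) ((blockOp N).le_opNorm w) 2
      _ = (‖blockOp N‖ * ‖x‖) ^ 2 := by rw [hwn]
  exact (pow_le_pow_iff_left₀ (norm_nonneg _)
    (mul_nonneg (norm_nonneg _) (norm_nonneg _)) two_ne_zero).mp h2

end compress

section matCfc

lemma matrix_entry_continuous {n : ℕ} (i j : Fin n) :
    Continuous fun M : Matrix (Fin n) (Fin n) ℂ => M i j := by
  let L : Matrix (Fin n) (Fin n) ℂ →ₗ[ℂ] ℂ :=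
    { toFun := fun M => M i j, map_add' := fun _ _ => rfl, map_smul' := fun _ _ => rfl }
  exact L.continuous_of_finiteDimensional

/-- entry of a continuous matrix-valued function, as a continuous map -/
noncomputable def entryCM {n : ℕ} {σ : Type*} [TopologicalSpace σ]
    (f : C(σ, Matrix (Fin n) (Fin n) ℂ)) (i j : Fin n) : C(σ, ℂ) :=
  ⟨fun x => f x i j, (matrix_entry_continuous i j).comp f.continuous⟩

@[simp] lemma entryCM_apply {n : ℕ} {σ : Type*} [TopologicalSpace σ]
    (f : C(σ, Matrix (Fin n) (Fin n) ℂ)) (i j : Fin n) (x : σ) :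
    entryCM f i j x = f x i j := rfl

variable {K : Type*} [NormedAddCommGroup K] [InnerProductSpace ℂ K] [CompleteSpace K]

/-- the matrix continuous functional calculus: a non-unital star algebra homomorphism from
matrix-valued continuous functions on the spectrum of a normal operator `U` into operators on
the `n`-fold ℓ²-sum. -/
noncomputable def matCfc (U : K →L[ℂ] K) [hUn : IsStarNormal U] {n : ℕ} :
    C(spectrum ℂ U, Matrix (Fin n) (Fin n) ℂ)
      →⋆ₙₐ[ℂ] (PiLp 2 (fun _ : Fin n => K) →L[ℂ] PiLp 2 (fun _ : Fin n => K)) where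
  toFun f := blockOp (Matrix.of fun i j => cfcHom hUn (entryCM f i j))
  map_add' f g := by
    have h : (Matrix.of fun i j => cfcHom hUn (entryCM (f + g) i j))
        = (Matrix.of fun i j => cfcHom hUn (entryCM f i j))
          + (Matrix.of fun i j => cfcHom hUn (entryCM g i j)) := by
      ext i j
      have he : entryCM (f + g) i j = entryCM f i j + entryCM g i j :=
        ContinuousMap.ext fun x => rfl
      simp [he, map_add]
    rw [h, blockOp_add]
  map_smul' c f := by
    have h : (Matrix.of fun i j => cfcHom hUn (entryCM (c • f) i j))
        = c • (Matrix.of fun i j => cfcHom hUn (entryCM f i j)) := by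
      ext i j
      have he : entryCM (c • f) i j = c • entryCM f i j := ContinuousMap.ext fun x => rfl
      simp [he]
    rw [h, blockOp_smul]
    rfl
  map_zero' := by
    have h : (Matrix.of fun i j => cfcHom hUn (entryCM (0 : C(spectrum ℂ U,
        Matrix (Fin n) (Fin n) ℂ)) i j)) = 0 := by
      ext i j
      have he : entryCM (0 : C(spectrum ℂ U, Matrix (Fin n) (Fin n) ℂ)) i j = 0 :=
        ContinuousMap.ext fun x => rfl
      simp [he]
    rw [h, blockOp_zero]
  map_mul' f g := by
    have h : (Matrix.of fun i j => cfcHom hUn (entryCM (f * g) i j))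
        = (Matrix.of fun i j => cfcHom hUn (entryCM f i j))
          * (Matrix.of fun i j => cfcHom hUn (entryCM g i j)) := by
      refine Matrix.ext fun i j => ?_
      have he : entryCM (f * g) i j = ∑ k, entryCM f i k * entryCM g k j :=
        ContinuousMap.ext fun x => by simp [Matrix.mul_apply]
      rw [Matrix.of_apply, he, map_sum, Matrix.mul_apply]
      simp
    rw [h, blockOp_mul]
  map_star' f := by
    have h : (Matrix.of fun i j => cfcHom hUn (entryCM (star f) i j))
        = (Matrix.of fun i j => ContinuousLinearMap.adjoint
            ((Matrix.of fun i j => cfcHom hUn (entryCM f i j)) j i)) := by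
      refine Matrix.ext fun i j => ?_
      have he : entryCM (star f) i j = star (entryCM f j i) :=
        ContinuousMap.ext fun x => rfl
      rw [Matrix.of_apply, he, map_star, ContinuousLinearMap.star_eq_adjoint]
      simp
    rw [h, blockOp_star, ContinuousLinearMap.star_eq_adjoint]

end matCfc

section norm

variable {K : Type*} [NormedAddCommGroup K] [InnerProductSpace ℂ K] [CompleteSpace K]

noncomputable instance matrixCStarAlgebra {n : ℕ} : CStarAlgebra (Matrix (Fin n) (Fin n) ℂ) := {}

lemma matCfc_norm_le (U : K →L[ℂ] K) [hUn : IsStarNormal U] {n : ℕ}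
    (f : C(spectrum ℂ U, Matrix (Fin n) (Fin n) ℂ)) :
    ‖matCfc U f‖ ≤ ‖f‖ :=
  NonUnitalStarAlgHom.norm_apply_le (matCfc U) f

end norm


/-- von Neumann's inequality via unitary dilation, with matrix version:
if `T` is a contraction with unitary dilation `U` (here `V : H → K` is the isometric
inclusion and `adjoint V` the orthogonal projection `P_H`, so `Tⁿ = P_H Uⁿ|_H`), then
for every polynomial `p`, `‖p(T)‖ ≤ ‖p(U)‖ ≤ sup_{|ξ|=1} |p(ξ)|`, and for every n×n matrix
`(p_{ij})` of polynomials, `‖(p_{ij}(T))‖_{Mₙ(B(H))} ≤ sup_{|ξ|=1} ‖(p_{ij}(ξ))‖_{Mₙ(ℂ)}`. -/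
theorem stmt19 {H K : Type*}
    [NormedAddCommGroup H] [InnerProductSpace ℂ H] [CompleteSpace H]
    [NormedAddCommGroup K] [InnerProductSpace ℂ K] [CompleteSpace K]
    (T : H →L[ℂ] H) (hT : ‖T‖ ≤ 1)
    (V : H →L[ℂ] K) (hV : ∀ x : H, ‖V x‖ = ‖x‖)
    (U : K →L[ℂ] K)
    (hU : ContinuousLinearMap.adjoint U * U = 1 ∧ U * ContinuousLinearMap.adjoint U = 1)
    (hdil : ∀ n : ℕ, T ^ n = ContinuousLinearMap.adjoint V ∘L (U ^ n) ∘L V) :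
    (∀ p : Polynomial ℂ,
      ‖Polynomial.aeval T p‖ ≤ ‖Polynomial.aeval U p‖
      ∧ ‖Polynomial.aeval U p‖
          ≤ sSup {r : ℝ | ∃ ξ : ℂ, ‖ξ‖ = 1 ∧ r = ‖Polynomial.eval ξ p‖})
    ∧ ∀ (n : ℕ) (P : Matrix (Fin n) (Fin n) (Polynomial ℂ)),
        ‖blockOp (P.map fun p => Polynomial.aeval T p)‖
          ≤ sSup {r : ℝ | ∃ ξ : ℂ, ‖ξ‖ = 1
              ∧ r = ‖Matrix.toEuclideanCLM (𝕜 := ℂ) (P.map (Polynomial.eval ξ))‖} := by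
  have hUu : U ∈ unitary (K →L[ℂ] K) := by
    constructor
    · rw [ContinuousLinearMap.star_eq_adjoint]; exact hU.1
    · rw [ContinuousLinearMap.star_eq_adjoint]; exact hU.2
  haveI hUn : IsStarNormal U := ⟨by
    rw [ContinuousLinearMap.star_eq_adjoint, Commute, SemiconjBy, hU.1, hU.2]⟩
  have hV1 : ‖V‖ ≤ 1 :=
    ContinuousLinearMap.opNorm_le_bound V zero_le_one fun x => by rw [hV x, one_mul]
  have hVa1 : ‖ContinuousLinearMap.adjoint V‖ ≤ 1 := by
    rw [LinearIsometryEquiv.norm_map]; exact hV1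
  -- the dilation identity for polynomials
  have key : ∀ p : Polynomial ℂ,
      Polynomial.aeval T p = ContinuousLinearMap.adjoint V ∘L Polynomial.aeval U p ∘L V := by
    intro p
    induction p using Polynomial.induction_on' with
    | add p q hp hq =>
      rw [map_add, map_add, hp, hq]
      ext x
      simp
    | monomial k c =>
      rw [Polynomial.aeval_monomial, Polynomial.aeval_monomial, hdil k]
      ext x
      simp [Algebra.algebraMap_eq_smul_one]
  -- spectrum of U lies in the unit circle
  have hspec : ∀ x ∈ spectrum ℂ U, ‖x‖ = 1 := by
    intro x hx
    have := Unitary.spectrum_subset_circle (⟨U, hUu⟩ : unitary (K →L[ℂ] K)) hx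
    simpa [Metric.mem_sphere, dist_zero_right] using this
  have hcomp : ∀ A : K →L[ℂ] K, ‖ContinuousLinearMap.adjoint V ∘L A ∘L V‖ ≤ ‖A‖ := by
    intro A
    calc ‖ContinuousLinearMap.adjoint V ∘L A ∘L V‖
        ≤ ‖ContinuousLinearMap.adjoint V‖ * ‖A ∘L V‖ := ContinuousLinearMap.opNorm_comp_le _ _
      _ ≤ 1 * (‖A‖ * ‖V‖) := by
          gcongr
          exact ContinuousLinearMap.opNorm_comp_le _ _
      _ ≤ 1 * (‖A‖ * 1) := by gcongr
      _ = ‖A‖ := by ring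
  constructor
  · intro p
    constructor
    · rw [key p]; exact hcomp _
    · set S := {r : ℝ | ∃ ξ : ℂ, ‖ξ‖ = 1 ∧ r = ‖Polynomial.eval ξ p‖} with hS
      have himg : S = (fun ξ : ℂ => ‖Polynomial.eval ξ p‖) '' Metric.sphere 0 1 := by
        ext r
        simp only [hS, Set.mem_setOf_eq, Set.mem_image, mem_sphere_zero_iff_norm]
        exact ⟨fun ⟨ξ, h1, h2⟩ => ⟨ξ, h1, h2.symm⟩, fun ⟨ξ, h1, h2⟩ => ⟨ξ, h1, h2.symm⟩⟩
      have hbdd : BddAbove S := by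
        rw [himg]
        exact ((isCompact_sphere 0 1).image ((Polynomial.continuous p).norm)).bddAbove
      have h0 : (0 : ℝ) ≤ sSup S :=
        le_trans (norm_nonneg (Polynomial.eval 1 p))
          (le_csSup hbdd ⟨1, by norm_num, rfl⟩)
      rw [← cfc_polynomial p U]
      exact norm_cfc_le h0 fun x hx => le_csSup hbdd ⟨x, hspec x hx, rfl⟩
  · intro n P
    set S := {r : ℝ | ∃ ξ : ℂ, ‖ξ‖ = 1
        ∧ r = ‖Matrix.toEuclideanCLM (𝕜 := ℂ) (P.map (Polynomial.eval ξ))‖} with hS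
    -- continuity of the matrix-valued polynomial function
    have hPcont : Continuous fun x : ℂ => P.map (Polynomial.eval x) := by
      have hrepr : (fun x : ℂ => P.map (Polynomial.eval x))
          = fun x => ∑ k ∈ Finset.range
              ((Finset.univ.sup fun ij : Fin n × Fin n => (P ij.1 ij.2).natDegree) + 1),
              x ^ k • Matrix.of fun i j => (P i j).coeff k := by
        funext x
        refine Matrix.ext fun i j => ?_
        rw [Matrix.map_apply, Polynomial.eval_eq_sum_range'
          (Nat.lt_succ_of_le (Finset.le_sup (f := fun ij : Fin n × Fin n =>
            (P ij.1 ij.2).natDegree) (Finset.mem_univ (i, j))))]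
        rw [Matrix.sum_apply]
        exact Finset.sum_congr rfl fun k _ => by
          rw [Matrix.smul_apply, Matrix.of_apply, smul_eq_mul, mul_comm]
      rw [hrepr]
      exact continuous_finset_sum _ fun k _ => (continuous_pow k).smul continuous_const
    have hnormcont : Continuous fun ξ : ℂ =>
        ‖Matrix.toEuclideanCLM (𝕜 := ℂ) (P.map (Polynomial.eval ξ))‖ := by
      have hL : Continuous fun M : Matrix (Fin n) (Fin n) ℂ =>
          Matrix.toEuclideanCLM (𝕜 := ℂ) M := by
        let L : Matrix (Fin n) (Fin n) ℂ →ₗ[ℂ]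
            (EuclideanSpace ℂ (Fin n) →L[ℂ] EuclideanSpace ℂ (Fin n)) :=
          { toFun := fun M => Matrix.toEuclideanCLM (𝕜 := ℂ) M,
            map_add' := fun a b => map_add _ a b,
            map_smul' := fun c a => map_smul _ c a }
        exact L.continuous_of_finiteDimensional
      exact (hL.comp hPcont).norm
    have himg : S = (fun ξ : ℂ =>
        ‖Matrix.toEuclideanCLM (𝕜 := ℂ) (P.map (Polynomial.eval ξ))‖) '' Metric.sphere 0 1 := by
      ext r
      simp only [hS, Set.mem_setOf_eq, Set.mem_image, mem_sphere_zero_iff_norm]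
      exact ⟨fun ⟨ξ, h1, h2⟩ => ⟨ξ, h1, h2.symm⟩, fun ⟨ξ, h1, h2⟩ => ⟨ξ, h1, h2.symm⟩⟩
    have hbdd : BddAbove S := by
      rw [himg]
      exact ((isCompact_sphere 0 1).image hnormcont).bddAbove
    have h0 : (0 : ℝ) ≤ sSup S :=
      le_trans (norm_nonneg _) (le_csSup hbdd ⟨1, by norm_num, rfl⟩)
    -- the matrix polynomial as a continuous function on the spectrum
    set fP : C(spectrum ℂ U, Matrix (Fin n) (Fin n) ℂ) :=
      ⟨fun x => P.map (Polynomial.eval (x : ℂ)), hPcont.comp continuous_subtype_val⟩ with hfPdef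
    have hfP : matCfc U fP = blockOp (P.map fun p => Polynomial.aeval U p) := by
      show blockOp (Matrix.of fun i j => cfcHom hUn (entryCM fP i j)) = _
      congr 1
      refine Matrix.ext fun i j => ?_
      rw [Matrix.of_apply, Matrix.map_apply]
      calc cfcHom hUn (entryCM fP i j)
          = cfc (fun ξ => Polynomial.eval ξ (P i j)) U := by
            rw [cfc_apply (fun ξ => Polynomial.eval ξ (P i j)) U hUn
              ((Polynomial.continuous (P i j)).continuousOn)]
            exact congrArg _ (ContinuousMap.ext fun x => rfl)
        _ = Polynomial.aeval U (P i j) := cfc_polynomial (P i j) U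
    have hfnorm : ‖fP‖ ≤ sSup S := by
      refine (ContinuousMap.norm_le _ h0).mpr fun x => ?_
      refine le_csSup hbdd ⟨(x : ℂ), hspec x x.2, ?_⟩
      rw [Matrix.cstar_norm_def]
      rfl
    have hmat : (P.map fun p => Polynomial.aeval T p)
        = Matrix.of fun i j => ContinuousLinearMap.adjoint V
            ∘L ((P.map fun p => Polynomial.aeval U p) i j) ∘L V := by
      refine Matrix.ext fun i j => ?_
      rw [Matrix.map_apply, Matrix.of_apply, Matrix.map_apply]
      exact key (P i j)
    calc ‖blockOp (P.map fun p => Polynomial.aeval T p)‖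
        ≤ ‖blockOp (P.map fun p => Polynomial.aeval U p)‖ := by
          rw [hmat]
          exact blockOp_compress V hV _
      _ = ‖matCfc U fP‖ := by rw [hfP]
      _ ≤ ‖fP‖ := matCfc_norm_le U fP
      _ ≤ sSup S := hfnorm
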